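/- Let k be a field of characteristic ≠ 2, let (V, ⟨·|·⟩) be a two-dimensional k-vector space with a nonzero alternating bilinear form, let s be a Lie algebra and T an s-module. Suppose g = (sp(V) ⊕ s) ⊕ (V ⊗ T) is a ℤ₂-graded Lie algebra with even part sp(V) ⊕ s (with sp(V) and s commuting) and odd part V ⊗ T, where sp(V) acts on V ⊗ T through the factor V, s acts through the factor T, and the bracket of two odd elements has the form [u ⊗ x, v ⊗ y] = (x|y)γ_{u,v} + ⟨u|v⟩ d_{x,y} for a bilinear form (·|·) : T × T → k and a bilinear map d : T × T → s, where γ_{u,v} = ⟨u|·⟩v + ⟨v|·⟩u ∈ sp(V). If (·|·) is not identically zero, then (·|·) is alternating, d is symmetric, T equipped with the triple product [xyz] := d_{x,y}·z (the action of d_{x,y} ∈ s on z ∈ T) is a symplectic triple system, and the image of s in gl(T) under the representation is contained in der T and contains inder T. -/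

import Mathlib

open scoped TensorProduct

attribute [local instance 100] LieRing.ofAssociativeRing

noncomputable section

variable {k : Type*} [Field k] {V : Type*} [AddCommGroup V] [Module k V]

/-- `γ_{u,v} = ⟨u|·⟩v + ⟨v|·⟩u ∈ sp(V)`. -/
def gam (om : V →ₗ[k] V →ₗ[k] k) (u v : V) : Module.End k V :=
  (om u).smulRight v + (om v).smulRight u

/-- The symplectic Lie algebra `sp(V)` of the alternating form `⟨·|·⟩`, as a submodule
of `End_k(V)` (it is a Lie subalgebra). -/
def spSet (om : V →ₗ[k] V →ₗ[k] k) : Submodule k (Module.End k V) where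
  carrier := {f | ∀ u w, om (f u) w + om u (f w) = 0}
  add_mem' := by
    intro f g hf hg u w
    simp only [Set.mem_setOf_eq, LinearMap.add_apply, map_add] at *
    linear_combination hf u w + hg u w
  zero_mem' := by intro u w; simp
  smul_mem' := by
    intro c f hf u w
    simp only [Set.mem_setOf_eq, LinearMap.smul_apply, map_smul, smul_eq_mul] at *
    linear_combination c * hf u w

end

/-- (Converse construction.)  Suppose
`g = (sp(V) ⊕ s) ⊕ (V ⊗ T)` is a ℤ₂-graded Lie algebra, where `s` is a Lie algebra
acting on `T` through a representation `ρ`, `sp(V)` acts on `V ⊗ T` through `V`, `s`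
acts through `T`, and the bracket of two odd elements is
`[u ⊗ x, v ⊗ y] = (x|y)γ_{u,v} + ⟨u|v⟩ d_{x,y}` for a bilinear form `(·|·)` on `T` and
a bilinear map `d : T × T → s`.  If `(·|·) ≠ 0`, then `(·|·)` is alternating, `d` is
symmetric, `T` with `[xyz] := ρ(d_{x,y})(z)` is a symplectic triple system, and the
image of `s` in `gl(T)` consists of derivations of `T` and contains `inder T`. -/
theorem stmt_2 {k : Type*} [Field k]
    {V : Type*} [AddCommGroup V] [Module k V]
    {T : Type*} [AddCommGroup T] [Module k T]
    {L : Type*} [LieRing L] [LieAlgebra k L]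
    (hchar : (2 : k) ≠ 0)
    -- V is 2-dimensional with a nonzero alternating form:
    (om : V →ₗ[k] V →ₗ[k] k) (homalt : ∀ v, om v v = 0) (homne : om ≠ 0)
    (hdimV : Module.finrank k V = 2)
    -- T is a module for the Lie algebra s (= L), via ρ:
    (ρ : L →ₗ⁅k⁆ Module.End k T)
    -- the bracket of the ℤ₂-graded Lie algebra g = (sp(V) ⊕ s) ⊕ (V ⊗ T):
    (br : ((Module.End k V × L) × (V ⊗[k] T)) →ₗ[k]
      ((Module.End k V × L) × (V ⊗[k] T)) →ₗ[k]
      ((Module.End k V × L) × (V ⊗[k] T)))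
    -- g is a Lie algebra:
    (hclosed : ∀ a ∈ ((spSet om).prod ⊤).prod (⊤ : Submodule k (V ⊗[k] T)),
      ∀ b ∈ ((spSet om).prod ⊤).prod (⊤ : Submodule k (V ⊗[k] T)),
        br a b ∈ ((spSet om).prod ⊤).prod (⊤ : Submodule k (V ⊗[k] T)))
    (hanti : ∀ a ∈ ((spSet om).prod ⊤).prod (⊤ : Submodule k (V ⊗[k] T)),
      ∀ b ∈ ((spSet om).prod ⊤).prod (⊤ : Submodule k (V ⊗[k] T)),
        br a b = - br b a)
    (hjac : ∀ a ∈ ((spSet om).prod ⊤).prod (⊤ : Submodule k (V ⊗[k] T)),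
      ∀ b ∈ ((spSet om).prod ⊤).prod (⊤ : Submodule k (V ⊗[k] T)),
        ∀ c ∈ ((spSet om).prod ⊤).prod (⊤ : Submodule k (V ⊗[k] T)),
          br (br a b) c + br (br b c) a + br (br c a) b = 0)
    -- sp(V) ⊕ s is the even part, with sp(V) and s commuting:
    (hbr1 : ∀ f₁ ∈ spSet om, ∀ f₂ ∈ spSet om, ∀ l₁ l₂ : L,
      br ((f₁, l₁), 0) ((f₂, l₂), 0) = ((⁅f₁, f₂⁆, ⁅l₁, l₂⁆), 0))
    -- the even part acts on V ⊗ T through V and through T respectively: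
    (hbr2 : ∀ f ∈ spSet om, ∀ (l : L) (u : V) (x : T),
      br ((f, l), 0) (0, u ⊗ₜ x) = (0, f u ⊗ₜ x + u ⊗ₜ ρ l x))
    -- the bracket of two odd elements has the prescribed form:
    (B : T →ₗ[k] T →ₗ[k] k) (dd : T →ₗ[k] T →ₗ[k] L)
    (hbr4 : ∀ (u : V) (x : T) (v : V) (y : T),
      br (0, u ⊗ₜ x) (0, v ⊗ₜ y) = ((B x y • gam om u v, om u v • dd x y), 0))
    -- and (·|·) is not identically zero:
    (hBne : B ≠ 0) :
    -- then (·|·) is alternating,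
    (∀ x, B x x = 0) ∧
    -- d is symmetric,
    (∀ x y, dd x y = dd y x) ∧
    -- T with [xyz] := ρ(d_{x,y})(z) is a symplectic triple system:
    (∀ x y z, ρ (dd x y) z = ρ (dd y x) z) ∧
    (∀ x y z, ρ (dd x y) z - ρ (dd x z) y
      = B x z • y - B x y • z + (2 * B y z) • x) ∧
    (∀ x y u v w, ρ (dd x y) (ρ (dd u v) w) =
      ρ (dd (ρ (dd x y) u) v) w + ρ (dd u (ρ (dd x y) v)) w + ρ (dd u v) (ρ (dd x y) w)) ∧
    (∀ x y u v, B (ρ (dd x y) u) v + B u (ρ (dd x y) v) = 0) ∧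
    -- the image of s in gl(T) consists of derivations of T:
    (∀ l : L, ∀ x y z, ρ l (ρ (dd x y) z)
      = ρ (dd (ρ l x) y) z + ρ (dd x (ρ l y)) z + ρ (dd x y) (ρ l z)) ∧
    -- and contains inder T:
    Submodule.span k {f : Module.End k T | ∃ x y, f = ρ (dd x y)}
      ≤ LinearMap.range ρ.toLinearMap := by

  classical
  -- skew-symmetry of om
  have homskew : ∀ a b : V, om a b = - om b a := by
    intro a b
    have h := homalt (a + b)
    simp only [map_add, LinearMap.add_apply, homalt] at h
    linear_combination h
  -- a hyperbolic pair
  obtain ⟨u, v, hc⟩ : ∃ u v, om u v ≠ 0 := by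
    by_contra h
    push_neg at h
    exact homne (by ext a b; simpa using h a b)
  have hune : u ≠ 0 := fun h => hc (by rw [h]; simp)
  have hvne : v ≠ 0 := fun h => hc (by rw [h]; simp)
  -- gam lands in spSet
  have gamMem : ∀ a b : V, gam om a b ∈ spSet om := by
    intro a b
    show ∀ z w, om ((gam om a b) z) w + om z ((gam om a b) w) = 0
    intro z w
    simp only [gam, LinearMap.add_apply, LinearMap.smulRight_apply, map_add, map_smul,
      LinearMap.smul_apply, smul_eq_mul]
    linear_combination om a w * homskew z b + om b w * homskew z a
  have gamsymm : ∀ a b : V, gam om a b = gam om b a := fun a b => add_comm _ _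
  have hgamuv : gam om u v ≠ 0 := by
    intro h0
    have h1 : (gam om u v) v = 0 := by rw [h0]; rfl
    simp only [gam, LinearMap.add_apply, LinearMap.smulRight_apply, homalt, zero_smul,
      add_zero] at h1
    rcases smul_eq_zero.mp h1 with h | h
    · exact hc h
    · exact hvne h
  have hgamuu : gam om u u ≠ 0 := by
    intro h0
    have h1 : (gam om u u) v = 0 := by rw [h0]; rfl
    simp only [gam, LinearMap.add_apply, LinearMap.smulRight_apply] at h1
    have h2 : (om u v + om u v) • u = 0 := by rw [add_smul]; exact h1
    rcases smul_eq_zero.mp h2 with h | h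
    · exact hc (by
        have : (2 : k) * om u v = 0 := by linear_combination h
        rcases mul_eq_zero.mp this with h' | h'
        · exact absurd h' hchar
        · exact h')
    · exact hune h
  -- membership helpers
  have modd : ∀ t : V ⊗[k] T,
      ((0 : Module.End k V × L), t) ∈
        ((spSet om).prod ⊤).prod (⊤ : Submodule k (V ⊗[k] T)) :=
    fun t => Submodule.mem_prod.mpr ⟨Submodule.zero_mem _, trivial⟩
  have meven : ∀ f : Module.End k V, f ∈ spSet om → ∀ l : L,
      (((f, l), (0 : V ⊗[k] T)) ∈
        ((spSet om).prod ⊤).prod (⊤ : Submodule k (V ⊗[k] T))) :=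
    fun f hf l => Submodule.mem_prod.mpr ⟨Submodule.mem_prod.mpr ⟨hf, trivial⟩, trivial⟩
  -- B is skew-symmetric
  have hBanti : ∀ x y : T, B x y = - B y x := by
    intro x y
    have h := hanti (0, u ⊗ₜ[k] x) (modd _) (0, u ⊗ₜ[k] y) (modd _)
    rw [hbr4, hbr4] at h
    have h1 : B x y • gam om u u = -(B y x • gam om u u) := by
      have := congrArg (fun p => p.1.1) h
      simpa using this
    have h2 : (B x y + B y x) • gam om u u = 0 := by
      rw [add_smul, h1]; abel
    rcases smul_eq_zero.mp h2 with h3 | h3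
    · linear_combination h3
    · exact absurd h3 hgamuu
  -- dd is symmetric
  have hddsymm : ∀ x y : T, dd x y = dd y x := by
    intro x y
    have h := hanti (0, u ⊗ₜ[k] x) (modd _) (0, v ⊗ₜ[k] y) (modd _)
    rw [hbr4, hbr4] at h
    have h1 : om u v • dd x y = -(om v u • dd y x) := by
      have := congrArg (fun p => p.1.2) h
      simpa using this
    rw [homskew v u, neg_smul, neg_neg] at h1
    exact smul_right_injective L hc h1
  -- the key identity coming from [even, odd, odd] Jacobi
  have keyA : ∀ (l : L) (x y : T),
      B (ρ l x) y = B (ρ l y) x ∧ ⁅l, dd x y⁆ = dd (ρ l x) y + dd (ρ l y) x := by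
    intro l x y
    have e1 : br (((0 : Module.End k V), l), 0) (0, u ⊗ₜ[k] x) = (0, u ⊗ₜ[k] ρ l x) := by
      rw [hbr2 0 (Submodule.zero_mem _) l u x]; simp
    have e1' : br (((0 : Module.End k V), l), 0) (0, v ⊗ₜ[k] y) = (0, v ⊗ₜ[k] ρ l y) := by
      rw [hbr2 0 (Submodule.zero_mem _) l v y]; simp
    have e3 : br ((0 : Module.End k V × L), v ⊗ₜ[k] y) (((0 : Module.End k V), l), 0)
        = -(0, v ⊗ₜ[k] ρ l y) := by
      rw [hanti _ (modd _) _ (meven 0 (Submodule.zero_mem _) l), e1']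
    have hz := hjac (((0 : Module.End k V), l), 0) (meven 0 (Submodule.zero_mem _) l)
      (0, u ⊗ₜ[k] x) (modd _) (0, v ⊗ₜ[k] y) (modd _)
    rw [e1, hbr4 u (ρ l x) v y, hbr4 u x v y,
      hbr1 _ (Submodule.smul_mem _ _ (gamMem u v)) 0 (Submodule.zero_mem _) _ l,
      e3, map_neg, LinearMap.neg_apply, hbr4 v (ρ l y) u x] at hz
    have hEnd := congrArg (fun p => p.1.1) hz
    have hL := congrArg (fun p => p.1.2) hz
    simp only [Prod.fst_add, Prod.snd_add, Prod.fst_neg, Prod.snd_neg, Prod.fst_zero,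
      Prod.snd_zero, lie_zero, add_zero, zero_add] at hEnd hL
    constructor
    · rw [gamsymm v u] at hEnd
      have hB' : (B (ρ l x) y - B (ρ l y) x) • gam om u v = 0 := by
        rw [sub_smul, sub_eq_add_neg]
        simpa using hEnd
      rcases smul_eq_zero.mp hB' with h3 | h3
      · linear_combination h3
      · exact absurd h3 hgamuv
    · rw [smul_lie, homskew v u, neg_smul, neg_neg] at hL
      have h4 : om u v • (dd (ρ l x) y + ⁅dd x y, l⁆ + dd (ρ l y) x) = 0 := by
        rw [smul_add, smul_add]
        simpa using hL
      rcases smul_eq_zero.mp h4 with h5 | h5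
      · exact absurd h5 hc
      · rw [← lie_skew, neg_eq_iff_add_eq_zero]
        calc ⁅dd x y, l⁆ + (dd (ρ l x) y + dd (ρ l y) x)
            = dd (ρ l x) y + ⁅dd x y, l⁆ + dd (ρ l y) x := by abel
          _ = 0 := h5
  -- the key identity coming from [odd, odd, odd] Jacobi
  have keyB : ∀ x y z : T, ρ (dd x y) z - ρ (dd y z) x
      = B x y • z + B y z • x - (2 * B z x) • y := by
    intro x y z
    have hz := hjac (0, u ⊗ₜ[k] x) (modd _) (0, v ⊗ₜ[k] y) (modd _) (0, u ⊗ₜ[k] z) (modd _)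
    rw [hbr4 u x v y, hbr4 v y u z, hbr4 u z u x,
      hbr2 _ (Submodule.smul_mem _ _ (gamMem u v)) _ u z,
      hbr2 _ (Submodule.smul_mem _ _ (gamMem v u)) _ u x,
      hbr2 _ (Submodule.smul_mem _ _ (gamMem u u)) _ v y] at hz
    have hodd := congrArg (fun p => p.2) hz
    simp only [Prod.snd_add, Prod.snd_zero] at hodd
    have h2 := congrArg (TensorProduct.lift ((LinearMap.lsmul k T).comp (om v))) hodd
    simp only [map_add, map_zero, TensorProduct.lift.tmul, LinearMap.coe_comp,
      Function.comp_apply, LinearMap.lsmul_apply, gam, LinearMap.add_apply,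
      LinearMap.smul_apply, LinearMap.smulRight_apply, homalt, map_smul, smul_smul,
      zero_smul, smul_zero, add_zero, zero_add, smul_add, map_smul,
      LinearMap.zero_apply, LinearMap.map_smul] at h2
    rw [homskew v u] at h2
    have h3 : (om u v * om u v) • (ρ (dd x y) z - ρ (dd y z) x)
        = (om u v * om u v) • (B x y • z + B y z • x - (2 * B z x) • y) := by
      linear_combination (norm := module) (-1 : k) • h2
    exact smul_right_injective T (mul_ne_zero hc hc) h3
  -- derivation property
  have hder : ∀ (l : L) (x y z : T), ρ l (ρ (dd x y) z)
      = ρ (dd (ρ l x) y) z + ρ (dd x (ρ l y)) z + ρ (dd x y) (ρ l z) := by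
    intro l x y z
    have h := (keyA l x y).2
    have h2 := congrArg (fun m => ρ m z) h
    simp only [LieHom.map_lie, Ring.lie_def, map_add, map_add, LinearMap.sub_apply,
      Module.End.mul_apply, LinearMap.add_apply] at h2
    rw [hddsymm (ρ l y) x] at h2
    linear_combination (norm := module) h2
  refine ⟨?_, hddsymm, ?_, ?_, ?_, ?_, hder, ?_⟩
  · intro x
    have h := hBanti x x
    have : (2 : k) * B x x = 0 := by linear_combination h
    rcases mul_eq_zero.mp this with h' | h'
    · exact absurd h' hchar
    · exact h'
  · intro x y z
    rw [hddsymm x y]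
  · intro x y z
    have h1 := keyB z x y
    rw [hddsymm z x, hBanti z x] at h1
    linear_combination (norm := module) (-1 : k) • h1
  · intro x y u' v' w
    exact hder (dd x y) u' v' w
  · intro x y u' v'
    have h1 := (keyA (dd x y) u' v').1
    have h2 := hBanti u' (ρ (dd x y) v')
    linear_combination h1 + h2
  · rw [Submodule.span_le]
    rintro f ⟨x, y, rfl⟩
    exact ⟨dd x y, rfl⟩
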